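/- Let T = (V, E) be a finite tree, θ : E → [0, 1], and let μ be the symmetric function on V × V multiplicative along T with μ(e) = θ_e on edges (a ferromagnetic tree model). Let 0 < ε ≤ 10^{−5} and let μ̃ : V × V → ℝ be symmetric with |μ̃(u, v) − μ(u, v)| ≤ ε for all u, v ∈ V. Let T_CL be a maximum weight spanning tree of the complete graph on V with respect to μ̃, let W = {e ∈ E(T_CL) : μ̃(e) ≤ 1/10}, and let V_1, …, V_m be the vertex sets of the connected components of T_CL after removing the edges in W. Then for each i ∈ [m]: (i) the subgraph T[V_i] of T induced by V_i is connected (a subtree of T); and (ii) every edge e of T with both endpoints in V_i satisfies θ_e ≥ 1/10 − ε. -/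

import Mathlib

open SimpleGraph

/-- A symmetric function `μ` is multiplicative along a graph `G` if `μ u u = 1` and `μ u v`
is the product of `μ` over the edges of any (hence, in a tree, the unique) path from `u` to
`v`. -/
def MultAlong {V : Type*} (G : SimpleGraph V) (μ : V → V → ℝ) : Prop :=
  (∀ u : V, μ u u = 1) ∧
  ∀ (u v : V) (p : G.Walk u v), p.IsPath →
    μ u v = (p.darts.map fun d => μ d.fst d.snd).prod

/-- The total weight of the edges of `G`, for a weight function `f` on unordered pairs. -/
noncomputable def edgeWeightSum {V : Type*} [Fintype V] (G : SimpleGraph V)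
    (f : Sym2 V → ℝ) : ℝ :=
  ∑ e ∈ G.edgeSet.toFinite.toFinset, f e

private lemma list_prod_mem_Icc (l : List ℝ) (h : ∀ x ∈ l, 0 ≤ x ∧ x ≤ 1) :
    0 ≤ l.prod ∧ l.prod ≤ 1 := by
  induction l with
  | nil => simp
  | cons a t ih =>
    have ha := h a List.mem_cons_self
    have ht := ih (fun x hx => h x (List.mem_cons_of_mem a hx))
    simp only [List.prod_cons]
    constructor
    · exact mul_nonneg ha.1 ht.1
    · calc a * t.prod ≤ 1 * 1 := by
            apply mul_le_mul ha.2 ht.2 ht.1 zero_le_one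
        _ = 1 := by ring

private lemma list_prod_le_of_mem (l : List ℝ) (h : ∀ x ∈ l, 0 ≤ x ∧ x ≤ 1) {a : ℝ}
    (ha : a ∈ l) : l.prod ≤ a := by
  induction l with
  | nil => simp at ha
  | cons b t ih =>
    have hb := h b List.mem_cons_self
    have ht : ∀ x ∈ t, 0 ≤ x ∧ x ≤ 1 := fun x hx => h x (List.mem_cons_of_mem b hx)
    have htp := list_prod_mem_Icc t ht
    simp only [List.prod_cons]
    rcases List.mem_cons.mp ha with rfl | hmem
    · nlinarith [htp.1, htp.2, hb.1]
    · have h2 := ih ht hmem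
      nlinarith [htp.1, hb.1, hb.2]

/-- **Structural lemma for Chow-Liu (each component induces a strongly-correlated subtree).**
Let `(T, θ)` be a ferromagnetic tree model (edge correlations `θ ∈ [0,1]`, here encoded by its
multiplicative correlation function `μ`), `0 < ε ≤ 10⁻⁵`, and let `μ̃` be `ε`-approximate
correlations. Let `T_CL` be a maximum weight spanning tree for `μ̃`, let `W` be its edges of
`μ̃`-weight at most `1/10`, and consider the connected components `V_1, …, V_m` of `T_CL`
after removing `W`. Then each component induces a connected subtree `T[V_i]` of `T`, and every
edge of `T` with both endpoints in the same component has correlation at least `1/10 − ε`. -/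
theorem chow_liu_structural_lemma
    {V : Type*} [Fintype V]
    (G : SimpleGraph V) (hG : G.IsTree)
    (μ : V → V → ℝ) (hμsymm : ∀ u v : V, μ u v = μ v u) (hμmult : MultAlong G μ)
    (hμedge : ∀ u v : V, G.Adj u v → μ u v ∈ Set.Icc (0 : ℝ) 1)
    (ε : ℝ) (hε0 : 0 < ε) (hε1 : ε ≤ 1 / 100000)
    (μt : V → V → ℝ) (hμtsymm : ∀ u v : V, μt u v = μt v u)
    (happrox : ∀ u v : V, |μt u v - μ u v| ≤ ε)
    (TCL : SimpleGraph V) (hTCL : TCL.IsTree)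
    (hmax : ∀ T' : SimpleGraph V, T'.IsTree →
      edgeWeightSum T' (Sym2.lift ⟨μt, hμtsymm⟩) ≤ edgeWeightSum TCL (Sym2.lift ⟨μt, hμtsymm⟩))
    -- `H` is `T_CL` with the weak edges `W` removed
    (H : SimpleGraph V)
    (hH : H = TCL.deleteEdges {e : Sym2 V | Sym2.lift ⟨μt, hμtsymm⟩ e ≤ 1 / 10}) :
    ∀ c : H.ConnectedComponent,
      (G.induce {v : V | H.connectedComponentMk v = c}).Connected ∧
      (∀ u v : V, G.Adj u v → H.connectedComponentMk u = c → H.connectedComponentMk v = c →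
        1 / 10 - ε ≤ μ u v) := by
  classical
  set f : Sym2 V → ℝ := Sym2.lift ⟨μt, hμtsymm⟩ with hf
  have hfmk : ∀ a b : V, f s(a, b) = μt a b := fun a b => rfl
  -- paths exist in G and in TCL
  have hpath : ∀ a b : V, ∃ P : G.Walk a b, P.IsPath := fun a b =>
    (hG.isConnected.preconnected a b).elim fun W => ⟨W.bypass, W.bypass_isPath⟩
  have hpathT : ∀ a b : V, ∃ P : TCL.Walk a b, P.IsPath := fun a b =>
    (hTCL.isConnected.preconnected a b).elim fun W => ⟨W.bypass, W.bypass_isPath⟩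
  -- basic facts about μ
  have hdartIcc : ∀ {a b : V} (P : G.Walk a b),
      ∀ x ∈ P.darts.map fun d => μ d.fst d.snd, 0 ≤ x ∧ x ≤ 1 := by
    intro a b P x hx
    rcases List.mem_map.mp hx with ⟨d, _, rfl⟩
    have := hμedge _ _ d.adj
    exact ⟨this.1, this.2⟩
  have hμ01 : ∀ p q : V, 0 ≤ μ p q ∧ μ p q ≤ 1 := by
    intro p q
    obtain ⟨P, hP⟩ := hpath p q
    rw [hμmult.2 p q P hP]
    exact list_prod_mem_Icc _ (hdartIcc P)
  have hsplit : ∀ (p q x : V) (P : G.Walk p q) (hP : P.IsPath) (hx : x ∈ P.support),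
      μ p q = μ p x * μ x q := by
    intro p q x P hP hx
    rw [hμmult.2 p q P hP, ← P.take_spec hx, Walk.darts_append, List.map_append,
      List.prod_append, ← hμmult.2 p x _ (hP.takeUntil hx), ← hμmult.2 x q _ (hP.dropUntil hx)]
  have hdartLB : ∀ (p q : V) (P : G.Walk p q) (hP : P.IsPath) (d : G.Dart) (hd : d ∈ P.darts),
      μ p q ≤ μ d.fst d.snd := by
    intro p q P hP d hd
    rw [hμmult.2 p q P hP]
    exact list_prod_le_of_mem _ (hdartIcc P) (List.mem_map_of_mem hd)
  have hup : ∀ a b : V, μ a b ≤ μt a b + ε ∧ μt a b - ε ≤ μ a b := by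
    intro a b
    have := abs_le.mp (happrox a b)
    constructor <;> linarith [this.1, this.2]
  have hHadj : ∀ a b : V, H.Adj a b ↔ TCL.Adj a b ∧ 1 / 10 < μt a b := by
    intro a b
    rw [hH, deleteEdges_adj]
    simp only [Set.mem_setOf_eq, ← hf, hfmk, not_le]
  -- The exchange (swap) lemma for the maximum weight spanning tree.
  have hswap : ∀ (p q : V), p ≠ q → ∀ (P : TCL.Walk p q), P.IsPath →
      ∀ e ∈ P.edges, f s(p, q) ≤ f e := by
    intro p q hpq P hP e he
    by_cases hadj : TCL.Adj p q
    · have hPs : P = Walk.cons hadj Walk.nil := by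
        have := hTCL.IsAcyclic.path_unique ⟨P, hP⟩ (Path.singleton hadj)
        exact congrArg Subtype.val this
      rw [hPs] at he
      simp only [Walk.edges_cons, Walk.edges_nil, List.mem_singleton] at he
      rw [he]
    · have hpqE : s(p, q) ∉ TCL.edgeSet := fun h => hadj h
      -- decompose the path at the edge e
      have hdecomp : ∀ (a b : V) (P' : TCL.Walk a b), P'.edges.Nodup → ∀ e' ∈ P'.edges,
          ∃ (x y : V) (P₁ : TCL.Walk a x) (P₂ : TCL.Walk y b),
            s(x, y) = e' ∧ e' ∉ P₁.edges ∧ e' ∉ P₂.edges := by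
        intro a b P'
        induction P' with
        | nil => intro _ e' he'; simp [Walk.edges_nil] at he'
        | cons h P'' ih =>
          intro hnd e' he'
          rw [Walk.edges_cons] at he' hnd
          rw [List.nodup_cons] at hnd
          rcases List.mem_cons.mp he' with rfl | hmem
          · exact ⟨_, _, Walk.nil, P'', rfl, by simp, hnd.1⟩
          · obtain ⟨x, y, P₁, P₂, hxy, h1, h2⟩ := ih hnd.2 e' hmem
            refine ⟨x, y, Walk.cons h P₁, P₂, hxy, ?_, h2⟩
            rw [Walk.edges_cons, List.mem_cons]
            rintro (rfl | hc)
            · exact hnd.1 hmem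
            · exact h1 hc
      obtain ⟨c₁, c₂, P₁, P₂, hc, h1, h2⟩ := hdecomp p q P hP.isTrail.edges_nodup e he
      have heE : e ∈ TCL.edgeSet := P.edges_subset_edgeSet he
      set T' : SimpleGraph V := TCL.deleteEdges {e} ⊔ fromEdgeSet {s(p, q)} with hT'
      have hT'edge : T'.edgeSet = (TCL.edgeSet \ {e}) ∪ {s(p, q)} := by
        rw [hT', edgeSet_sup, edgeSet_deleteEdges, edgeSet_fromEdgeSet]
        ext e'
        simp only [Set.mem_union, Set.mem_diff, Set.mem_singleton_iff, Set.mem_setOf_eq]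
        constructor
        · rintro (h' | ⟨h', _⟩)
          · exact Or.inl h'
          · exact Or.inr h'
        · rintro (h' | rfl)
          · exact Or.inl h'
          · exact Or.inr ⟨rfl, by simpa [Sym2.mk_isDiag_iff] using hpq⟩
      have htrans : ∀ (a b : V) (Wk : TCL.Walk a b), e ∉ Wk.edges →
          (TCL.deleteEdges {e}).Reachable a b := by
        intro a b Wk hW
        refine ⟨Wk.transfer _ fun e' he' => ?_⟩
        rw [edgeSet_deleteEdges]
        exact ⟨Wk.edges_subset_edgeSet he', fun h' => hW (Set.mem_singleton_iff.mp h' ▸ he')⟩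
      have hT'pq : T'.Adj p q := by
        rw [hT', sup_adj, fromEdgeSet_adj]
        exact Or.inr ⟨rfl, hpq⟩
      have hR1 : T'.Reachable p c₁ := (htrans _ _ P₁ h1).mono le_sup_left
      have hR2 : T'.Reachable c₂ q := (htrans _ _ P₂ h2).mono le_sup_left
      have hRcd : T'.Reachable c₁ c₂ := hR1.symm.trans (hT'pq.reachable.trans hR2.symm)
      have hadjR : ∀ a b : V, TCL.Adj a b → T'.Reachable a b := by
        intro a b hab
        by_cases habe : s(a, b) = e
        · have : s(a, b) = s(c₁, c₂) := habe.trans hc.symm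
          rcases Sym2.eq_iff.mp this with ⟨rfl, rfl⟩ | ⟨rfl, rfl⟩
          · exact hRcd
          · exact hRcd.symm
        · refine Adj.reachable ?_
          rw [hT', sup_adj]
          exact Or.inl (deleteEdges_adj.mpr ⟨hab, by simpa using habe⟩)
      have hwalkR : ∀ (a b : V) (Wk : TCL.Walk a b), T'.Reachable a b := by
        intro a b Wk
        induction Wk with
        | nil => exact Reachable.refl _
        | cons h W ih => exact (hadjR _ _ h).trans ih
      have hT'conn : T'.Connected := by
        rw [connected_iff]
        refine ⟨fun a b => ?_, hTCL.isConnected.nonempty⟩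
        exact (hTCL.isConnected.preconnected a b).elim fun W => hwalkR a b W
      have hbridge : TCL.IsBridge e :=
        isAcyclic_iff_forall_edge_isBridge.mp hTCL.IsAcyclic heE
      have hnotReach : ¬(TCL.deleteEdges {e}).Reachable c₁ c₂ := by
        rw [← hc] at hbridge ⊢
        rw [isBridge_iff] at hbridge
        exact hbridge
      have hT'acyc : T'.IsAcyclic := by
        intro v C hC
        by_cases hm : s(p, q) ∈ C.edges
        · have hb2 : ¬(T' \ fromEdgeSet {s(p, q)}).Reachable p q := by
            rintro ⟨Wd⟩
            have hsub : ∀ e' ∈ Wd.edges, e' ∈ (TCL.deleteEdges {e}).edgeSet := by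
              intro e' he'
              have h3 := Wd.edges_subset_edgeSet he'
              rw [edgeSet_sdiff, edgeSet_fromEdgeSet] at h3
              have hne : e' ≠ s(p, q) := by
                intro h4
                have hnd : ¬ e'.IsDiag := SimpleGraph.not_isDiag_of_mem_edgeSet _ h3.1
                exact h3.2 ⟨h4, hnd⟩
              rw [edgeSet_deleteEdges]
              have h5 : e' ∈ T'.edgeSet := h3.1
              rw [hT'edge] at h5
              rcases h5 with h5 | h5
              · exact h5
              · exact absurd h5 hne
            have hreach : (TCL.deleteEdges {e}).Reachable p q := ⟨Wd.transfer _ hsub⟩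
            exact hnotReach (((htrans _ _ P₁ h1).symm.trans hreach).trans
              (htrans _ _ P₂ h2).symm)
          have hbr : T'.IsBridge s(p, q) := isBridge_iff.mpr hb2
          exact (isBridge_iff_forall_cycle_notMem (show s(p, q) ∈ T'.edgeSet from hT'pq)).mp hbr C hC hm
        · have hsub : ∀ e' ∈ C.edges, e' ∈ TCL.edgeSet := by
            intro e' he'
            have h3 := C.edges_subset_edgeSet he'
            rw [hT'edge] at h3
            rcases h3 with h3 | h3
            · exact h3.1
            · exact absurd (h3 ▸ he') hm
          exact hTCL.IsAcyclic (C.transfer TCL hsub) (hC.transfer hsub)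
      have hT'tree : T'.IsTree := ⟨hT'conn, hT'acyc⟩
      have hsum := hmax T' hT'tree
      have hfs : T'.edgeSet.toFinite.toFinset
          = insert s(p, q) (TCL.edgeSet.toFinite.toFinset.erase e) := by
        ext e'
        simp only [Set.Finite.mem_toFinset, Finset.mem_insert, Finset.mem_erase, hT'edge,
          Set.mem_union, Set.mem_diff, Set.mem_singleton_iff]
        tauto
      have hspq_not : s(p, q) ∉ TCL.edgeSet.toFinite.toFinset.erase e := by
        simp only [Finset.mem_erase, Set.Finite.mem_toFinset]
        exact fun h' => hpqE h'.2
      have heInt : e ∈ TCL.edgeSet.toFinite.toFinset := by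
        simpa using heE
      have h1' : edgeWeightSum T' f = f s(p, q) +
          (edgeWeightSum TCL f - f e) := by
        unfold edgeWeightSum
        rw [hfs, Finset.sum_insert hspq_not]
        have := Finset.add_sum_erase (TCL.edgeSet.toFinite.toFinset) f heInt
        linarith [this]
      rw [hf] at hsum ⊢
      rw [← hf] at hsum ⊢
      rw [h1'] at hsum
      linarith
  -- vertices in different components of H have weak empirical correlation
  have hcross : ∀ x w : V, ¬H.Reachable x w → μt x w ≤ 1 / 10 := by
    intro x w hnr
    have hxw : x ≠ w := by rintro rfl; exact hnr (Reachable.refl x)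
    obtain ⟨P, hP⟩ := hpathT x w
    have hex : ∃ e ∈ P.edges, f e ≤ 1 / 10 := by
      by_contra hcon
      push_neg at hcon
      refine hnr ⟨P.transfer H ?_⟩
      intro e' he'
      rw [hH, edgeSet_deleteEdges]
      exact ⟨P.edges_subset_edgeSet he', fun hmem => absurd hmem (not_le.mpr (hcon e' he'))⟩
    obtain ⟨e, he, hle⟩ := hex
    have := hswap x w hxw P hP e he
    rw [hfmk] at this
    linarith
  -- the core geometric step
  have hCORE : ∀ w w' : V, H.Adj w w' → ∀ (P : G.Walk w w'), P.IsPath →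
      ∀ x ∈ P.support, H.Reachable x w' := by
    intro w w' hww' P hP x hx
    by_cases hxw' : x = w'
    · subst hxw'; exact Reachable.refl x
    by_cases hxw : x = w
    · subst hxw; exact hww'.reachable
    by_contra hnr
    have hnr2 : ¬H.Reachable x w := fun h => hnr (h.trans hww'.reachable)
    have hc1 : μt x w ≤ 1 / 10 := hcross x w hnr2
    have hc2 : μt x w' ≤ 1 / 10 := hcross x w' hnr
    have hsp := hsplit w w' x P hP hx
    have hμt1 : 1 / 10 < μt w w' := ((hHadj w w').mp hww').2
    have hA := (hup w x).1
    have hB := (hup x w').1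
    have hC := (hup w w').2
    have h01A := hμ01 w x
    have h01B := hμ01 x w'
    have hμtwx : μt w x = μt x w := hμtsymm w x
    have hkey : μ w x * μ x w' ≤ (1 / 10 + ε) * (1 / 10 + ε) := by
      apply mul_le_mul _ _ h01B.1 (by linarith)
      · linarith
      · linarith
    nlinarith [hkey, hsp, hC, hμt1, hε0, hε1]
  -- support of the G-path between two H-connected vertices stays in the component
  have hclosed : ∀ (p q : V) (Q : H.Walk p q) (P : G.Walk p q), P.IsPath →
      ∀ x ∈ P.support, H.Reachable x q := by
    intro p q Q
    induction Q with
    | nil =>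
      intro P hP x hx
      rw [Walk.isPath_iff_eq_nil] at hP
      subst hP
      simp only [Walk.support_nil, List.mem_singleton] at hx
      subst hx
      exact Reachable.refl _
    | @cons a z b h Q' ih =>
      intro P hP x hx
      obtain ⟨P1, hP1⟩ := hpath a z
      obtain ⟨P2, hP2⟩ := hpath z b
      have hPeq : P = (P1.append P2).bypass := by
        have := hG.IsAcyclic.path_unique ⟨P, hP⟩ ⟨(P1.append P2).bypass,
          Walk.bypass_isPath _⟩
        exact congrArg Subtype.val this
      have hx' : x ∈ (P1.append P2).support :=
        Walk.support_bypass_subset _ (hPeq ▸ hx)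
      rw [Walk.mem_support_append_iff] at hx'
      rcases hx' with h1 | h2
      · exact (hCORE a z h P1 hP1 x h1).trans ⟨Q'⟩
      · exact ih P2 hP2 x h2
  -- now prove the two statements
  intro c
  constructor
  · -- the component induces a connected subgraph of G
    rw [connected_iff]
    constructor
    · rintro ⟨a, ha⟩ ⟨b, hb⟩
      have hab : H.Reachable a b := ConnectedComponent.exact (ha.trans hb.symm)
      obtain ⟨P, hP⟩ := hpath a b
      have hsup : ∀ x ∈ P.support, H.connectedComponentMk x = c := by
        intro x hx
        obtain ⟨Q⟩ := hab
        have := hclosed a b Q P hP x hx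
        exact (ConnectedComponent.sound this).trans hb
      -- build a walk in the induced graph
      have hind : ∀ (a' b' : V) (P' : G.Walk a' b')
          (_ : ∀ x ∈ P'.support, H.connectedComponentMk x = c)
          (ha' : a' ∈ {v : V | H.connectedComponentMk v = c})
          (hb' : b' ∈ {v : V | H.connectedComponentMk v = c}),
          (G.induce {v : V | H.connectedComponentMk v = c}).Reachable ⟨a', ha'⟩ ⟨b', hb'⟩ := by
        intro a' b' P'
        induction P' with
        | nil => intro _ _ _; exact Reachable.refl _
        | @cons a'' y b'' hadj P'' ih =>
          intro hsup' ha' hb'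
          have hy : y ∈ {v : V | H.connectedComponentMk v = c} :=
            hsup' y (by simp [Walk.support_cons])
          have hstep : (G.induce {v : V | H.connectedComponentMk v = c}).Adj
              ⟨a'', ha'⟩ ⟨y, hy⟩ := by
            simp only [comap_adj, Function.Embedding.coe_subtype]
            exact hadj
          refine hstep.reachable.trans (ih ?_ hy hb')
          intro x hx
          exact hsup' x (by simp [Walk.support_cons, hx])
      exact hind a b P hsup ha hb
    · obtain ⟨v₀, hv₀⟩ := c.exists_rep
      exact ⟨⟨v₀, hv₀⟩⟩
  · -- every G-edge inside the component is strongly correlated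
    intro u v huv hcu hcv
    set G' : SimpleGraph V := G.deleteEdges {s(u, v)} with hG'
    have hL1 : ¬G'.Reachable u v := by
      rintro ⟨W⟩
      have hPpath := W.bypass_isPath
      have hsub : ∀ e' ∈ W.bypass.edges, e' ∈ G.edgeSet := by
        intro e' he'
        have h1 := W.bypass.edges_subset_edgeSet he'
        rw [hG', edgeSet_deleteEdges] at h1
        exact h1.1
      have hEq := hG.IsAcyclic.path_unique
        ⟨W.bypass.transfer G hsub, hPpath.transfer hsub⟩ (Path.singleton huv)
      have hEdges : s(u, v) ∈ (W.bypass.transfer G hsub).edges := by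
        rw [show W.bypass.transfer G hsub = (Path.singleton huv).1 from
          congrArg Subtype.val hEq]
        simp [Path.singleton]
      rw [Walk.edges_transfer] at hEdges
      have h2 := W.bypass.edges_subset_edgeSet hEdges
      rw [hG', edgeSet_deleteEdges] at h2
      exact h2.2 rfl
    have hfind : ∀ (p q : V) (Q : H.Walk p q), ¬G'.Reachable u p → G'.Reachable u q →
        ∃ w w' : V, H.Adj w w' ∧ ¬G'.Reachable u w ∧ G'.Reachable u w' := by
      intro p q Q
      induction Q with
      | nil => intro h1 h2; exact absurd h2 h1
      | @cons a z b h Q' ih =>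
        intro h1 h2
        by_cases hz : G'.Reachable u z
        · exact ⟨a, z, h, h1, hz⟩
        · exact ih hz h2
    have hvu : H.Reachable v u := ConnectedComponent.exact (hcv.trans hcu.symm)
    obtain ⟨Q⟩ := hvu
    obtain ⟨w, w', hww', hnw, hw'⟩ := hfind v u Q hL1 (Reachable.refl u)
    obtain ⟨P, hPp⟩ := hpath w' w
    have hmem : s(u, v) ∈ P.edges := by
      by_contra hne
      have hsub : ∀ e' ∈ P.edges, e' ∈ G'.edgeSet := by
        intro e' he'
        rw [hG', edgeSet_deleteEdges]
        exact ⟨P.edges_subset_edgeSet he', fun h' =>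
          hne (Set.mem_singleton_iff.mp h' ▸ he')⟩
      exact hnw (hw'.trans ⟨P.transfer G' hsub⟩)
    rcases List.mem_map.mp hmem with ⟨d, hd, hde⟩
    have hD := hdartLB w' w P hPp d hd
    have hdd : μ d.fst d.snd = μ u v := by
      have : s(d.fst, d.snd) = s(u, v) := hde
      rcases Sym2.eq_iff.mp this with ⟨h1, h2⟩ | ⟨h1, h2⟩
      · rw [h1, h2]
      · rw [h1, h2, hμsymm]
    have hμt1 : 1 / 10 < μt w w' := ((hHadj w w').mp hww').2
    have hμtsym : μt w' w = μt w w' := hμtsymm w' w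
    have hlow := (hup w' w).2
    linarith [hD, hdd ▸ hD]
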